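/- Let m ≥ 1 be real and x, y ≥ 0. Define V_m(x,y) = (1+x+y)^m. Then for λ ≥ γ/(1+x) and μ ≥ γ/(1+y) (with γ > 0), λ·(V_m(x,y) − V_m(0,y)) + μ·(V_m(x,y) − V_m(x,0)) ≥ γ·(x/(1+x) + y/(1+y))·(1+x+y)^{m−1}. -/

import Mathlib

open Real

lemma drop_key (m a b : ℝ) (hm : 1 ≤ m) (hb : 1 ≤ b) (hab : b ≤ a) :
    (a - b) * a ^ (m - 1) ≤ a ^ m - b ^ m := by
  have ha : (1:ℝ) ≤ a := hb.trans hab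
  have hb0 : (0:ℝ) < b := by linarith
  have ha0 : (0:ℝ) < a := by linarith
  have h1 : b ^ m = b ^ (m - 1) * b := by
    rw [← Real.rpow_add_one hb0.ne' (m - 1)]; ring_nf
  have h2 : a ^ m = a ^ (m - 1) * a := by
    rw [← Real.rpow_add_one ha0.ne' (m - 1)]; ring_nf
  have h3 : b ^ (m - 1) ≤ a ^ (m - 1) :=
    Real.rpow_le_rpow (by linarith) hab (by linarith)
  nlinarith [Real.rpow_nonneg hb0.le (m - 1)]

theorem generator_drop_lower_bound (m γ x y lam mu : ℝ) (hm : 1 ≤ m) (hγ : 0 < γ)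
    (hx : 0 ≤ x) (hy : 0 ≤ y)
    (hlam : γ / (1 + x) ≤ lam) (hmu : γ / (1 + y) ≤ mu) :
    γ * (x / (1 + x) + y / (1 + y)) * (1 + x + y) ^ (m - 1)
      ≤ lam * ((1 + x + y) ^ m - (1 + 0 + y) ^ m)
        + mu * ((1 + x + y) ^ m - (1 + x + 0) ^ m) := by
  have hx1 : (0:ℝ) < 1 + x := by linarith
  have hy1 : (0:ℝ) < 1 + y := by linarith
  set A := (1 + x + y) ^ (m - 1) with hA
  have hA0 : 0 ≤ A := Real.rpow_nonneg (by linarith) _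
  have h1 : x * A ≤ (1 + x + y) ^ m - (1 + y) ^ m := by
    have := drop_key m (1 + x + y) (1 + y) hm (by linarith) (by linarith)
    simpa [show 1 + x + y - (1 + y) = x by ring] using this
  have h2 : y * A ≤ (1 + x + y) ^ m - (1 + x) ^ m := by
    have := drop_key m (1 + x + y) (1 + x) hm (by linarith) (by linarith)
    simpa [show 1 + x + y - (1 + x) = y by ring] using this
  have e : γ * (x / (1 + x) + y / (1 + y)) * A
      = (γ / (1 + x)) * (x * A) + (γ / (1 + y)) * (y * A) := by
    field_simp
  have g1 : (γ / (1 + x)) * (x * A) ≤ lam * ((1 + x + y) ^ m - (1 + y) ^ m) :=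
    mul_le_mul hlam h1 (by positivity) (le_trans (by positivity) hlam)
  have g2 : (γ / (1 + y)) * (y * A) ≤ mu * ((1 + x + y) ^ m - (1 + x) ^ m) :=
    mul_le_mul hmu h2 (by positivity) (le_trans (by positivity) hmu)
  rw [e]
  have : (1 + 0 + y : ℝ) = 1 + y := by ring
  rw [this, show (1 + x + 0 : ℝ) = 1 + x by ring]
  linarith
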